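/- Let Φ : ℝ^{d_θ+d_ω} → ℝ be C², let b(θ,ω) = b₀(θ,ω) + η b₁(θ,ω) with b₀ = (−∇_θΦ; ∇_ωΦ) and b₁ as in the alternating-update SDE, and let σσ^T = 2β^{−1}·diag(Σ_θ, Σ_ω). Then the infinitesimal generator applied to Φ satisfies: 𝒜Φ(θ,ω) = −‖∇_θΦ‖₂² + ‖∇_ωΦ‖₂² − (η/2)[∇_θΦ^T ∇²_θΦ ∇_θΦ + ∇_ωΦ^T ∇²_ωΦ ∇_ωΦ] + β^{−1} Tr(Σ_θ ∇²_θΦ + Σ_ω ∇²_ωΦ). -/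

import Mathlib

open Real Matrix

lemma trace_fromBlocks' {m n : Type*} [Fintype m] [Fintype n] [DecidableEq m] [DecidableEq n]
    (A : Matrix m m ℝ) (B : Matrix m n ℝ) (C : Matrix n m ℝ) (D : Matrix n n ℝ) :
    (Matrix.fromBlocks A B C D).trace = A.trace + D.trace := by
  simp [Matrix.trace, Fintype.sum_sum_type, Matrix.fromBlocks, Matrix.diag]

lemma snd_symm {E : Type*} [NormedAddCommGroup E] [NormedSpace ℝ E]
    (Φ : E → ℝ) (hΦ : ContDiff ℝ 2 Φ) (u v w : E) :
    fderiv ℝ (fun x => fderiv ℝ Φ x w) u v = fderiv ℝ (fun x => fderiv ℝ Φ x v) u w := by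
  have hsymm : IsSymmSndFDerivAt ℝ Φ u := hΦ.contDiffAt.isSymmSndFDerivAt (by norm_num)
  have hdiff : DifferentiableAt ℝ (fderiv ℝ Φ) u :=
    (hΦ.fderiv_right (m := 1) (le_refl 2)).differentiable (by norm_num) u
  have key : ∀ z : E, fderiv ℝ (fun x => fderiv ℝ Φ x z) u
      = (ContinuousLinearMap.apply ℝ ℝ z).comp (fderiv ℝ (fderiv ℝ Φ) u) := by
    intro z
    exact ((ContinuousLinearMap.apply ℝ ℝ z).hasFDerivAt.comp u hdiff.hasFDerivAt).fderiv
  rw [key, key]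
  simpa using hsymm.eq v w

/-- explicit form of the infinitesimal generator applied to the loss `Φ`
for the alternating-update GAN SDE. -/
theorem stmt_10 (dθ dω : ℕ) (η β : ℝ) (hη : 0 < η) (hβ : 0 < β)
    (Φ : EuclideanSpace ℝ (Fin dθ ⊕ Fin dω) → ℝ) (hΦ : ContDiff ℝ 2 Φ)
    -- gradient and Hessian of Φ in coordinates:
    (g : EuclideanSpace ℝ (Fin dθ ⊕ Fin dω) → (Fin dθ ⊕ Fin dω) → ℝ)
    (hg : ∀ u i, g u i = fderiv ℝ Φ u (EuclideanSpace.single i 1))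
    (H : EuclideanSpace ℝ (Fin dθ ⊕ Fin dω) → Matrix (Fin dθ ⊕ Fin dω) (Fin dθ ⊕ Fin dω) ℝ)
    (hH : ∀ u i j, H u i j =
      fderiv ℝ (fun v => fderiv ℝ Φ v (EuclideanSpace.single j 1)) u (EuclideanSpace.single i 1))
    -- Hessian blocks:
    (Hθθ : EuclideanSpace ℝ (Fin dθ ⊕ Fin dω) → Matrix (Fin dθ) (Fin dθ) ℝ)
    (Hθω : EuclideanSpace ℝ (Fin dθ ⊕ Fin dω) → Matrix (Fin dθ) (Fin dω) ℝ)
    (Hωθ : EuclideanSpace ℝ (Fin dθ ⊕ Fin dω) → Matrix (Fin dω) (Fin dθ) ℝ)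
    (Hωω : EuclideanSpace ℝ (Fin dθ ⊕ Fin dω) → Matrix (Fin dω) (Fin dω) ℝ)
    (hHθθ : ∀ u i j, Hθθ u i j = H u (.inl i) (.inl j))
    (hHθω : ∀ u i j, Hθω u i j = H u (.inl i) (.inr j))
    (hHωθ : ∀ u i j, Hωθ u i j = H u (.inr i) (.inl j))
    (hHωω : ∀ u i j, Hωω u i j = H u (.inr i) (.inr j))
    -- diffusion coefficients:
    (Sθ : EuclideanSpace ℝ (Fin dθ ⊕ Fin dω) → Matrix (Fin dθ) (Fin dθ) ℝ)
    (Sω : EuclideanSpace ℝ (Fin dθ ⊕ Fin dω) → Matrix (Fin dω) (Fin dω) ℝ)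
    (hSθ : ∀ u, (Sθ u).IsSymm ∧ (Sθ u).PosSemidef)
    (hSω : ∀ u, (Sω u).IsSymm ∧ (Sω u).PosSemidef)
    -- drift:
    (b₀ b₁ b : EuclideanSpace ℝ (Fin dθ ⊕ Fin dω) → (Fin dθ ⊕ Fin dω) → ℝ)
    (hb₀ : ∀ u, b₀ u = Sum.elim (fun i => -(g u (.inl i))) (fun j => g u (.inr j)))
    (hb₁ : ∀ u, b₁ u = (1/2 : ℝ) •
      ((Matrix.fromBlocks (Hθθ u) (-(Hθω u)) (-(Hωθ u)) (-(Hωω u))).mulVec (b₀ u)))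
    (hb : ∀ u, b u = b₀ u + η • b₁ u)
    -- σσᵀ = (2/β)·diag(Sθ, Sω) and the generator applied to Φ:
    (SS : EuclideanSpace ℝ (Fin dθ ⊕ Fin dω) → Matrix (Fin dθ ⊕ Fin dω) (Fin dθ ⊕ Fin dω) ℝ)
    (hSS : ∀ u, SS u = (2 / β) • Matrix.fromBlocks (Sθ u) 0 0 (Sω u))
    (AΦ : EuclideanSpace ℝ (Fin dθ ⊕ Fin dω) → ℝ)
    (hAΦ : ∀ u, AΦ u = (b u) ⬝ᵥ (g u) + (1/2 : ℝ) * ((SS u) * (H u)).trace) :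
    ∀ u, AΦ u =
      -(∑ i, (g u (.inl i)) ^ 2) + (∑ j, (g u (.inr j)) ^ 2)
      - (η / 2) * ((fun i => g u (.inl i)) ⬝ᵥ (Hθθ u).mulVec (fun i => g u (.inl i))
          + (fun j => g u (.inr j)) ⬝ᵥ (Hωω u).mulVec (fun j => g u (.inr j)))
      + (1 / β) * (((Sθ u) * (Hθθ u)).trace + ((Sω u) * (Hωω u)).trace) := by
  intro u
  set gθ : Fin dθ → ℝ := fun i => g u (.inl i) with hgθ
  set gω : Fin dω → ℝ := fun j => g u (.inr j) with hgω
  -- symmetry of the Hessian off-diagonal blocks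
  have hsym : Hωθ u = (Hθω u)ᵀ := by
    ext i j
    rw [Matrix.transpose_apply, hHωθ, hHθω, hH, hH]
    exact snd_symm Φ hΦ u _ _
  -- block form of the Hessian
  have hHfb : H u = Matrix.fromBlocks (Hθθ u) (Hθω u) (Hωθ u) (Hωω u) := by
    ext i j
    cases i <;> cases j
    · simp [Matrix.fromBlocks_apply₁₁, hHθθ]
    · simp [Matrix.fromBlocks_apply₁₂, hHθω]
    · simp [Matrix.fromBlocks_apply₂₁, hHωθ]
    · simp [Matrix.fromBlocks_apply₂₂, hHωω]
  -- trace part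
  have htr : (1/2 : ℝ) * ((SS u) * (H u)).trace
      = (1 / β) * (((Sθ u) * (Hθθ u)).trace + ((Sω u) * (Hωω u)).trace) := by
    rw [hSS, hHfb, Matrix.smul_mul, Matrix.trace_smul, Matrix.fromBlocks_multiply]
    simp only [Matrix.zero_mul, Matrix.mul_zero, add_zero, zero_add]
    rw [trace_fromBlocks', smul_eq_mul]
    field_simp
  -- the gradient as a `Sum.elim`
  have hgel : g u = Sum.elim gθ gω := by
    funext i; cases i <;> rfl
  have hb₀' : b₀ u = Sum.elim (-gθ) gω := by rw [hb₀]; rfl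
  -- zeroth-order drift part
  have hd0 : b₀ u ⬝ᵥ g u = -(∑ i, gθ i ^ 2) + (∑ j, gω j ^ 2) := by
    rw [hb₀', hgel, sumElim_dotProduct_sumElim, neg_dotProduct]
    simp [dotProduct, pow_two]
  -- first-order drift part
  have hd1 : b₁ u ⬝ᵥ g u
      = (1/2 : ℝ) * (-(gθ ⬝ᵥ (Hθθ u).mulVec gθ) - gω ⬝ᵥ (Hωω u).mulVec gω) := by
    rw [hb₁, hb₀', hgel, smul_dotProduct, Matrix.fromBlocks_mulVec]
    have hcl : (Sum.elim (-gθ) gω ∘ Sum.inl) = -gθ := rfl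
    have hcr : (Sum.elim (-gθ) gω ∘ Sum.inr) = gω := rfl
    rw [hcl, hcr, sumElim_dotProduct_sumElim]
    simp only [Matrix.neg_mulVec, Matrix.mulVec_neg, add_dotProduct,
      neg_dotProduct, neg_neg, smul_eq_mul]
    have hcross : (Hωθ u).mulVec gθ ⬝ᵥ gω = (Hθω u).mulVec gω ⬝ᵥ gθ := by
      rw [hsym, Matrix.mulVec_transpose,
        dotProduct_comm ((Hθω u).mulVec gω) gθ, Matrix.dotProduct_mulVec]
    rw [hcross, dotProduct_comm ((Hθθ u).mulVec gθ) gθ,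
      dotProduct_comm ((Hωω u).mulVec gω) gω]
    ring
  -- combine
  rw [hAΦ, hb, add_dotProduct, smul_dotProduct, hd0, hd1, htr]
  rw [smul_eq_mul]
  ring
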